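/- In the partition algebra, π(A) = A · ∏_{τ transposition with ⟨τ⟩ not ≤ A} (e − ⟨τ⟩), where the product ranges over transpositions τ whose corresponding two-element-block partition is not a refinement of A, and e denotes the discrete partition (the algebra unit). -/

import Mathlib

/- The partition algebra: the free ℚ-algebra on the commutative monoid of
partitions of `{1,…,n}` (setoids on `Fin n`) under join, with unit the
discrete partition `⊥`. -/

def PartM (n : ℕ) := Setoid (Fin n)

instance (n : ℕ) : CommMonoid (PartM n) where
  mul a b := ((a : Setoid (Fin n)) ⊔ (b : Setoid (Fin n)) : Setoid (Fin n))
  one := (⊥ : Setoid (Fin n))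
  mul_assoc a b c := sup_assoc (α := Setoid (Fin n)) a b c
  one_mul a := bot_sup_eq (α := Setoid (Fin n)) a
  mul_one a := sup_bot_eq (α := Setoid (Fin n)) a
  mul_comm a b := sup_comm (α := Setoid (Fin n)) a b

/-- The basis element of the partition algebra corresponding to a partition. -/
noncomputable def partBasis (n : ℕ) (A : Setoid (Fin n)) : MonoidAlgebra ℚ (PartM n) :=
  MonoidAlgebra.of ℚ (PartM n) A

/- `π(A) = ∏_{B : ¬ B ≤ A} (A − A·B)`, with `π` of the trivial partition `⊤`
set to be `⊤` itself. -/

open scoped Classical in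
noncomputable def piOp (n : ℕ) (A : Setoid (Fin n)) : MonoidAlgebra ℚ (PartM n) :=
  if A = ⊤ then partBasis n A
  else ∏ᶠ (B : Setoid (Fin n)) (_ : ¬ B ≤ A), (partBasis n A - partBasis n (A ⊔ B))
/-- The partition with the single nontrivial block `{i,j}`, identified with the
transposition `(i,j)`. -/
def transPart (n : ℕ) (i j : Fin n) : Setoid (Fin n) :=
  Relation.EqvGen.setoid (fun x y => x = i ∧ y = j)

open scoped Classical

instance auxFinite (n : ℕ) : Finite (Setoid (Fin n)) :=
  Finite.of_injective (fun s : Setoid (Fin n) => s.r)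
    (fun a b h => Setoid.ext fun x y => iff_of_eq (congrFun (congrFun h x) y))

noncomputable instance auxFintype (n : ℕ) : Fintype (Setoid (Fin n)) :=
  Fintype.ofFinite _

lemma partBasis_mul {n : ℕ} (A B : Setoid (Fin n)) :
    partBasis n A * partBasis n B = partBasis n (A ⊔ B) := by
  have h := map_mul (MonoidAlgebra.of ℚ (PartM n)) (show PartM n from A) (show PartM n from B)
  exact h.symm

lemma transPart_rel {n : ℕ} (i j : Fin n) : (transPart n i j) i j :=
  Relation.EqvGen.rel i j ⟨rfl, rfl⟩

lemma transPart_le {n : ℕ} {i j : Fin n} {B : Setoid (Fin n)} (h : B i j) :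
    transPart n i j ≤ B :=
  Setoid.eqvGen_le fun x y hxy => by rcases hxy with ⟨rfl, rfl⟩; exact h

lemma exists_trans {n : ℕ} {A B : Setoid (Fin n)} (h : ¬ B ≤ A) :
    ∃ T : Setoid (Fin n),
      ((∃ i j : Fin n, i ≠ j ∧ T = transPart n i j) ∧ ¬ T ≤ A) ∧ T ≤ B := by
  rw [Setoid.le_def] at h
  push_neg at h
  obtain ⟨x, y, hB, hA⟩ := h
  have hxy : x ≠ y := by rintro rfl; exact hA (A.refl x)
  refine ⟨transPart n x y, ⟨⟨x, y, hxy, rfl⟩, fun hle => hA ?_⟩, transPart_le hB⟩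
  exact Setoid.le_def.mp hle (transPart_rel x y)

lemma absorb {n : ℕ} {T B : Setoid (Fin n)} (h : T ≤ B) :
    ((1 : MonoidAlgebra ℚ (PartM n)) - partBasis n T) * (1 - partBasis n B)
      = 1 - partBasis n T := by
  have key : partBasis n T * partBasis n B = partBasis n B := by
    rw [partBasis_mul, sup_eq_right.mpr h]
  ring_nf
  linear_combination key

lemma partBasis_idem {n : ℕ} (A : Setoid (Fin n)) :
    partBasis n A * partBasis n A = partBasis n A := by
  rw [partBasis_mul, sup_idem]

theorem piOp_eq_mul_prod_transpositions {n : ℕ} (A : Setoid (Fin n)) :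
    piOp n A = partBasis n A *
      ∏ᶠ (T : Setoid (Fin n))
        (_ : (∃ i j : Fin n, i ≠ j ∧ T = transPart n i j) ∧ ¬ T ≤ A),
        ((1 : MonoidAlgebra ℚ (PartM n)) - partBasis n T) := by
  set q : Setoid (Fin n) → Prop :=
    fun T => (∃ i j : Fin n, i ≠ j ∧ T = transPart n i j) ∧ ¬ T ≤ A with hq
  set t : Finset (Setoid (Fin n)) := Finset.univ.filter q with ht
  have htmem : ∀ {x : Setoid (Fin n)}, q x ↔ x ∈ t := by
    intro x; simp [ht]
  have hrt : (∏ᶠ (T : Setoid (Fin n)) (_ : q T),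
      ((1 : MonoidAlgebra ℚ (PartM n)) - partBasis n T))
      = ∏ T ∈ t, (1 - partBasis n T) :=
    finprod_cond_eq_prod_of_cond_iff _ (fun _ => htmem)
  -- the key absorption property of the transposition product
  set Q : MonoidAlgebra ℚ (PartM n) := ∏ T ∈ t, (1 - partBasis n T) with hQ
  have absorbQ : ∀ B : Setoid (Fin n), ¬ B ≤ A → Q * (1 - partBasis n B) = Q := by
    intro B hB
    obtain ⟨T, hTq, hTB⟩ := exists_trans hB
    have hTt : T ∈ t := htmem.mp hTq
    rw [hQ, ← Finset.mul_prod_erase _ _ hTt, mul_right_comm, absorb hTB]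
  by_cases hA : A = ⊤
  · have ht0 : t = ∅ := by
      rw [ht]
      ext x
      simp only [Finset.mem_filter, Finset.mem_univ, true_and, Finset.notMem_empty,
        iff_false, hq]
      rintro ⟨-, hx⟩
      exact hx (hA ▸ le_top)
    have hQ1 : Q = 1 := by rw [hQ, ht0, Finset.prod_empty]
    rw [piOp, if_pos hA, hrt, hQ1, mul_one]
  · rw [piOp, if_neg hA, hrt]
    set p : Setoid (Fin n) → Prop := fun B => ¬ B ≤ A with hp
    set s : Finset (Setoid (Fin n)) := Finset.univ.filter p with hs
    have hsmem : ∀ {x : Setoid (Fin n)}, p x ↔ x ∈ s := by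
      intro x; simp [hs]
    have hls : (∏ᶠ (B : Setoid (Fin n)) (_ : ¬ B ≤ A),
        (partBasis n A - partBasis n (A ⊔ B)))
        = ∏ B ∈ s, (partBasis n A - partBasis n (A ⊔ B)) :=
      finprod_cond_eq_prod_of_cond_iff _ (fun _ => hsmem)
    rw [hls]
    have hfactor : ∀ B : Setoid (Fin n),
        partBasis n A - partBasis n (A ⊔ B)
          = partBasis n A * (1 - partBasis n B) := by
      intro B
      rw [mul_sub, mul_one, partBasis_mul]
    calc ∏ B ∈ s, (partBasis n A - partBasis n (A ⊔ B))
        = ∏ B ∈ s, (partBasis n A * (1 - partBasis n B)) := by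
          exact Finset.prod_congr rfl fun B _ => hfactor B
      _ = (∏ _B ∈ s, partBasis n A) * ∏ B ∈ s, (1 - partBasis n B) := by
          rw [Finset.prod_mul_distrib]
      _ = partBasis n A ^ s.card * ∏ B ∈ s, (1 - partBasis n B) := by
          rw [Finset.prod_const]
      _ = partBasis n A * ∏ B ∈ s, (1 - partBasis n B) := by
          have hcard : s.card ≠ 0 := by
            have : (⊤ : Setoid (Fin n)) ∈ s := by
              apply hsmem.mp
              rw [hp]
              simp only [top_le_iff]
              exact hA
            exact Finset.card_ne_zero_of_mem this
          obtain ⟨m, hm⟩ := Nat.exists_eq_succ_of_ne_zero hcard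
          have hpow : ∀ k : ℕ, partBasis n A ^ (k + 1) = partBasis n A := by
            intro k
            induction k with
            | zero => simp
            | succ k ih => rw [pow_succ, ih, partBasis_idem]
          rw [hm, hpow]
      _ = partBasis n A * Q := by
          congr 1
          have hts : t ⊆ s := by
            intro x hx
            exact hsmem.mp ((htmem.mpr hx).2)
          have key : ∀ u : Finset (Setoid (Fin n)), (∀ x ∈ u, ¬ x ≤ A) →
              Q * ∏ B ∈ u, (1 - partBasis n B) = Q := by
            intro u
            induction u using Finset.induction_on with
            | empty => simp
            | insert _ _ hnotmem ih =>
              rename_i a u'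
              intro hu
              rw [Finset.prod_insert hnotmem, ← mul_assoc,
                mul_comm Q (1 - partBasis n a), mul_assoc, ih fun x hx => hu x (Finset.mem_insert_of_mem hx),
                mul_comm, absorbQ a (hu a (Finset.mem_insert_self a u'))]
          have hsplit : ∏ B ∈ s, (1 - partBasis n B)
              = (∏ B ∈ s \ t, (1 - partBasis n B)) * Q := by
            rw [hQ, Finset.prod_sdiff hts]
          rw [hsplit, mul_comm _ Q]
          exact key _ fun x hx => (hsmem.mpr (Finset.mem_sdiff.mp hx).1)
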